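/- Let F : ℝ^m → ℝ^n be twice continuously differentiable with F(θ*) = 0 at some point θ*, and suppose the Jacobian J_F has constant rank r on a neighborhood U of θ*. Then there exist an open neighborhood W ⊆ U of θ* and a constant C_⊥ > 0 such that for every θ ∈ W, ‖P_{range(J_F(θ))^⊥} F(θ)‖₂ ≤ C_⊥ ‖F(θ)‖₂², where P_{range(J_F(θ))^⊥} denotes the orthogonal projection of ℝ^n onto the orthogonal complement of the column space of J_F(θ). In other words, the component of the residual F(θ) orthogonal to the range of the Jacobian is of second order in ‖F(θ)‖₂. -/

import Mathlib

open Topology Filter Metric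

section Aux

/-- The norm of the projection onto `S'ᗮ` is at most the distance to any element of `S'`. -/
lemma aux_proj_bound {n : ℕ} (S' : Submodule ℝ (EuclideanSpace ℝ (Fin n)))
    (v w : EuclideanSpace ℝ (Fin n)) (hw : w ∈ S') :
    ‖(Submodule.orthogonalProjectionOnto S'ᗮ v : EuclideanSpace ℝ (Fin n))‖ ≤ ‖v - w‖ := by
  have h0 : Submodule.orthogonalProjectionOnto S'ᗮ w = 0 :=
    Submodule.orthogonalProjectionOnto_apply_of_mem_orthogonal (S'.le_orthogonal_orthogonal hw)
  have h1 : Submodule.orthogonalProjectionOnto S'ᗮ v = Submodule.orthogonalProjectionOnto S'ᗮ (v - w) := by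
    rw [map_sub, h0, sub_zero]
  rw [h1]
  have h2 := (Submodule.orthogonalProjectionOnto S'ᗮ).le_opNorm (v - w)
  have h3 : ‖Submodule.orthogonalProjectionOnto S'ᗮ‖ ≤ 1 := Submodule.orthogonalProjectionOnto_norm_le _
  calc ‖(Submodule.orthogonalProjectionOnto S'ᗮ (v - w) : EuclideanSpace ℝ (Fin n))‖
      = ‖Submodule.orthogonalProjectionOnto S'ᗮ (v - w)‖ := rfl
    _ ≤ ‖Submodule.orthogonalProjectionOnto S'ᗮ‖ * ‖v - w‖ := h2
    _ ≤ 1 * ‖v - w‖ := by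
        exact mul_le_mul_of_nonneg_right h3 (norm_nonneg _)
    _ = ‖v - w‖ := one_mul _

lemma aux_segment {E : Type*} [NormedAddCommGroup E] [NormedSpace ℝ E] {x y z : E}
    (h : z ∈ segment ℝ y x) : ‖z - x‖ ≤ ‖y - x‖ := by
  obtain ⟨a, b, ha, hb, hab, rfl⟩ := h
  have hb' : b = 1 - a := by linarith
  subst hb'
  have h1 : a • y + (1 - a) • x - x = a • (y - x) := by
    rw [smul_sub, sub_smul, one_smul]; abel
  rw [h1, norm_smul, Real.norm_of_nonneg ha]
  have ha1 : a ≤ 1 := by linarith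
  nlinarith [norm_nonneg (y - x)]

end Aux

set_option maxHeartbeats 4000000 in
/-- **The residual component orthogonal to the Jacobian range is second order.**
If `F : ℝ^m → ℝ^n` is `C²` with `F(θ*) = 0` and its Jacobian has constant rank `r` on a
neighborhood `U` of `θ*`, then there are an open neighborhood `W ⊆ U` of `θ*` and a
constant `C⊥ > 0` such that for all `θ ∈ W`,
`‖P_{range(J_F(θ))ᗮ} F(θ)‖ ≤ C⊥ ‖F(θ)‖²`. -/
theorem orthogonal_residual_second_order
    (m n : ℕ) (F : EuclideanSpace ℝ (Fin m) → EuclideanSpace ℝ (Fin n))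
    (θstar : EuclideanSpace ℝ (Fin m)) (r : ℕ) (U : Set (EuclideanSpace ℝ (Fin m)))
    (hF : ContDiff ℝ 2 F)
    (hFzero : F θstar = 0)
    (hU_open : IsOpen U) (hθU : θstar ∈ U)
    (hrank : ∀ θ ∈ U, Module.finrank ℝ (LinearMap.range ((fderiv ℝ F θ : EuclideanSpace ℝ (Fin m) →ₗ[ℝ] EuclideanSpace ℝ (Fin n)))) = r) :
    ∃ (W : Set (EuclideanSpace ℝ (Fin m))) (Cperp : ℝ),
      IsOpen W ∧ W ⊆ U ∧ θstar ∈ W ∧ 0 < Cperp ∧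
      ∀ θ ∈ W,
        ‖(Submodule.orthogonalProjectionOnto (LinearMap.range ((fderiv ℝ F θ : EuclideanSpace ℝ (Fin m) →ₗ[ℝ] EuclideanSpace ℝ (Fin n))))ᗮ (F θ) :
            EuclideanSpace ℝ (Fin n))‖ ≤ Cperp * ‖F θ‖ ^ 2 := by
  classical
  have htwo : (1 : WithTop ℕ∞) ≤ 2 := by norm_num
  have hFd : Differentiable ℝ F := hF.differentiable (by norm_num)
  set J := fderiv ℝ F with hJdef
  have hJc : ContDiff ℝ 1 J := hF.fderiv_right (by norm_num)
  have hJcont : Continuous J := hJc.continuous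
  set S : Submodule ℝ (EuclideanSpace ℝ (Fin n)) := LinearMap.range ((J θstar : EuclideanSpace ℝ (Fin m) →ₗ[ℝ] EuclideanSpace ℝ (Fin n))) with hSdef
  set K : Submodule ℝ (EuclideanSpace ℝ (Fin m)) := LinearMap.ker ((J θstar : EuclideanSpace ℝ (Fin m) →ₗ[ℝ] EuclideanSpace ℝ (Fin n))) with hKdef
  set Q := Submodule.orthogonalProjectionOnto S with hQdef
  set pK := Submodule.orthogonalProjectionOnto K with hpKdef
  -- ### Step 1: kernel of `Q ∘ J θ` equals kernel of `J θ` near `θstar`.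
  have hker : ∀ᶠ θ in 𝓝 θstar, ∀ x, Q (J θ x) = 0 → J θ x = 0 := by
    have hrr : Module.finrank ℝ S = r := hrank θstar hθU
    let b : Module.Basis (Fin r) ℝ S := Module.finBasisOfFinrankEq ℝ S hrr
    have hbmem : ∀ i, ∃ x, J θstar x = (b i : EuclideanSpace ℝ (Fin n)) := fun i => (b i).2
    choose u hu using hbmem
    have hAstar : (fun i => Q (J θstar (u i))) = fun i => b i := by
      funext i
      rw [hQdef, hu i]
      exact Submodule.orthogonalProjectionOnto_mem_subspace_eq_self (b i)
    have li0 : LinearIndependent ℝ (fun i => Q (J θstar (u i))) := by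
      rw [hAstar]; exact b.linearIndependent
    have hgcont : Continuous (fun θ => fun i => Q (J θ (u i))) :=
      continuous_pi fun i => Q.continuous.comp
        ((ContinuousLinearMap.apply ℝ (EuclideanSpace ℝ (Fin n)) (u i)).continuous.comp hJcont)
    have hliev : ∀ᶠ θ in 𝓝 θstar, LinearIndependent ℝ (fun i => Q (J θ (u i))) :=
      (hgcont.tendsto θstar).eventually li0.eventually
    have hUev : ∀ᶠ θ in 𝓝 θstar, θ ∈ U := hU_open.eventually_mem hθU
    filter_upwards [hliev, hUev] with θ hli hθ
    intro x hx
    -- the continuous linear map `A = Q ∘ J θ`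
    set A := Q.comp (J θ) with hAdef
    have hrJ : Module.finrank ℝ (LinearMap.range ((J θ : EuclideanSpace ℝ (Fin m) →ₗ[ℝ] EuclideanSpace ℝ (Fin n)))) = r := hrank θ hθ
    -- `finrank (range A) ≤ r`
    have hle1 : Module.finrank ℝ (LinearMap.range (A : EuclideanSpace ℝ (Fin m) →ₗ[ℝ] ↥S)) ≤ r := by
      have hrc : LinearMap.range (A : EuclideanSpace ℝ (Fin m) →ₗ[ℝ] ↥S)
          = Submodule.map (Q : EuclideanSpace ℝ (Fin n) →ₗ[ℝ] ↥S) (LinearMap.range ((J θ : EuclideanSpace ℝ (Fin m) →ₗ[ℝ] EuclideanSpace ℝ (Fin n)))) := by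
        ext v
        simp only [LinearMap.mem_range, Submodule.mem_map, hAdef,
          ContinuousLinearMap.comp_apply, ContinuousLinearMap.coe_coe]
        constructor
        · rintro ⟨x, rfl⟩; exact ⟨J θ x, ⟨x, rfl⟩, rfl⟩
        · rintro ⟨w, ⟨x, rfl⟩, rfl⟩; exact ⟨x, rfl⟩
      rw [hrc, ← hrJ]
      exact Submodule.finrank_map_le _ _
    -- `finrank (range A) ≥ r`
    have hge1 : r ≤ Module.finrank ℝ (LinearMap.range (A : EuclideanSpace ℝ (Fin m) →ₗ[ℝ] ↥S)) := by
      have hsub : ∀ i, Q (J θ (u i)) ∈ LinearMap.range (A : EuclideanSpace ℝ (Fin m) →ₗ[ℝ] ↥S) := fun i => ⟨u i, rfl⟩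
      have hspan : Submodule.span ℝ (Set.range fun i => Q (J θ (u i))) ≤ LinearMap.range (A : EuclideanSpace ℝ (Fin m) →ₗ[ℝ] ↥S) :=
        Submodule.span_le.2 (Set.range_subset_iff.2 hsub)
      have hcard : Module.finrank ℝ
          (Submodule.span ℝ (Set.range fun i => Q (J θ (u i)))) = r := by
        rw [finrank_span_eq_card hli, Fintype.card_fin]
      rw [← hcard]
      exact Submodule.finrank_mono hspan
    have hrA : Module.finrank ℝ (LinearMap.range (A : EuclideanSpace ℝ (Fin m) →ₗ[ℝ] ↥S)) = r := le_antisymm hle1 hge1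
    -- kernels
    have hk1 : LinearMap.ker ((J θ : EuclideanSpace ℝ (Fin m) →ₗ[ℝ] EuclideanSpace ℝ (Fin n))) ≤ LinearMap.ker (A : EuclideanSpace ℝ (Fin m) →ₗ[ℝ] ↥S) := by
      intro y hy
      have : J θ y = 0 := hy
      simp only [hAdef, LinearMap.mem_ker, ContinuousLinearMap.coe_coe, ContinuousLinearMap.comp_apply, this, map_zero]
    have hrnA := LinearMap.finrank_range_add_finrank_ker
      (A : EuclideanSpace ℝ (Fin m) →ₗ[ℝ] ↥S)
    have hrnJ := LinearMap.finrank_range_add_finrank_ker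
      ((J θ) : EuclideanSpace ℝ (Fin m) →ₗ[ℝ] EuclideanSpace ℝ (Fin n))
    rw [finrank_euclideanSpace_fin] at hrnA hrnJ
    have hkeq : LinearMap.ker ((J θ : EuclideanSpace ℝ (Fin m) →ₗ[ℝ] EuclideanSpace ℝ (Fin n))) = LinearMap.ker (A : EuclideanSpace ℝ (Fin m) →ₗ[ℝ] ↥S) := by
      apply Submodule.eq_of_le_of_finrank_eq hk1
      have e1 : LinearMap.range ((J θ) : EuclideanSpace ℝ (Fin m) →ₗ[ℝ] EuclideanSpace ℝ (Fin n)) = LinearMap.range ((J θ : EuclideanSpace ℝ (Fin m) →ₗ[ℝ] EuclideanSpace ℝ (Fin n))) := rfl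
      have e2 : LinearMap.ker ((J θ) : EuclideanSpace ℝ (Fin m) →ₗ[ℝ] EuclideanSpace ℝ (Fin n)) = LinearMap.ker ((J θ : EuclideanSpace ℝ (Fin m) →ₗ[ℝ] EuclideanSpace ℝ (Fin n))) := rfl
      have e3 : LinearMap.range (A : EuclideanSpace ℝ (Fin m) →ₗ[ℝ] ↥S) = LinearMap.range (A : EuclideanSpace ℝ (Fin m) →ₗ[ℝ] ↥S) := rfl
      have e4 : LinearMap.ker (A : EuclideanSpace ℝ (Fin m) →ₗ[ℝ] ↥S) = LinearMap.ker (A : EuclideanSpace ℝ (Fin m) →ₗ[ℝ] ↥S) := rfl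
      rw [e1, e2] at hrnJ
      rw [e3, e4] at hrnA
      omega
    have : x ∈ LinearMap.ker (A : EuclideanSpace ℝ (Fin m) →ₗ[ℝ] ↥S) := by
      simpa [hAdef, LinearMap.mem_ker] using hx
    rw [← hkeq] at this
    exact this
  -- ### Step 2 : the local inverse `Φ` of `Ψ := (Q ∘ F, pK)`.
  set Ψ : EuclideanSpace ℝ (Fin m) → ↥S × ↥K := fun θ => (Q (F θ), pK θ) with hΨdef
  have hΨc : ContDiff ℝ 2 Ψ := (Q.contDiff.comp hF).prodMk pK.contDiff
  set Ψ' : EuclideanSpace ℝ (Fin m) →L[ℝ] ↥S × ↥K := (Q.comp (J θstar)).prod pK with hΨ'def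
  have hΨd0 : HasFDerivAt Ψ Ψ' θstar := by
    have h1 : HasFDerivAt F (J θstar) θstar := (hFd θstar).hasFDerivAt
    exact (Q.hasFDerivAt.comp θstar h1).prodMk pK.hasFDerivAt
  have hker0 : ∀ x, Ψ' x = 0 → x = 0 := by
    intro x hx
    have h1 : Q (J θstar x) = 0 := congrArg Prod.fst hx
    have h2 : pK x = 0 := congrArg Prod.snd hx
    have hmem : J θstar x ∈ S := ⟨x, rfl⟩
    have hm2 := Submodule.orthogonalProjectionOnto_mem_subspace_eq_self (K := S) ⟨J θstar x, hmem⟩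
    have hJx : J θstar x = 0 := by
      have : (⟨J θstar x, hmem⟩ : S) = 0 := by rw [← hm2]; exact h1
      exact congrArg Subtype.val this
    have hxK : x ∈ K := hJx
    have hm3 := Submodule.orthogonalProjectionOnto_mem_subspace_eq_self (K := K) ⟨x, hxK⟩
    have : (⟨x, hxK⟩ : K) = 0 := by rw [← hm3]; exact h2
    exact congrArg Subtype.val this
  have hinj : Function.Injective Ψ' := by
    intro x y hxy
    have := hker0 (x - y) (by rw [map_sub, hxy, sub_self])
    exact sub_eq_zero.mp this
  have hdim : Module.finrank ℝ (EuclideanSpace ℝ (Fin m)) = Module.finrank ℝ (↥S × ↥K) := by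
    rw [Module.finrank_prod, finrank_euclideanSpace_fin]
    have hrn := LinearMap.finrank_range_add_finrank_ker
      ((J θstar) : EuclideanSpace ℝ (Fin m) →ₗ[ℝ] EuclideanSpace ℝ (Fin n))
    rw [finrank_euclideanSpace_fin] at hrn
    have e1 : LinearMap.range ((J θstar) : EuclideanSpace ℝ (Fin m) →ₗ[ℝ]
        EuclideanSpace ℝ (Fin n)) = S := rfl
    have e2 : LinearMap.ker ((J θstar) : EuclideanSpace ℝ (Fin m) →ₗ[ℝ]
        EuclideanSpace ℝ (Fin n)) = K := rfl
    rw [e1, e2] at hrn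
    omega
  let eΨ : EuclideanSpace ℝ (Fin m) ≃ₗ[ℝ] ↥S × ↥K :=
    LinearMap.linearEquivOfInjective
      (Ψ' : EuclideanSpace ℝ (Fin m) →ₗ[ℝ] ↥S × ↥K) hinj hdim
  let e : EuclideanSpace ℝ (Fin m) ≃L[ℝ] ↥S × ↥K := eΨ.toContinuousLinearEquiv
  have hecoe : (e : EuclideanSpace ℝ (Fin m) →L[ℝ] ↥S × ↥K) = Ψ' := by
    apply ContinuousLinearMap.ext
    intro x
    show e x = Ψ' x
    have h1 : e x = eΨ x := rfl
    rw [h1]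
    exact LinearMap.linearEquivOfInjective_apply hinj hdim x
  have hΨd : HasFDerivAt Ψ (e : EuclideanSpace ℝ (Fin m) →L[ℝ] ↥S × ↥K) θstar := by
    rw [hecoe]; exact hΨd0
  have hΨca : ContDiffAt ℝ 2 Ψ θstar := hΨc.contDiffAt
  have strict : HasStrictFDerivAt Ψ
      (e : EuclideanSpace ℝ (Fin m) →L[ℝ] ↥S × ↥K) θstar :=
    hΨca.hasStrictFDerivAt' hΨd (by norm_num)
  set Φ : ↥S × ↥K → EuclideanSpace ℝ (Fin m) := strict.localInverse Ψ e θstar with hΦdef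
  have hΦc : ContDiffAt ℝ 2 Φ (Ψ θstar) := hΨca.to_localInverse (f' := e) hΨd (by norm_num)
  have hleft : ∀ᶠ θ in 𝓝 θstar, Φ (Ψ θ) = θ := strict.eventually_left_inverse
  have hright : ∀ᶠ p in 𝓝 (Ψ θstar), Ψ (Φ p) = p := strict.eventually_right_inverse
  have hΦstar : Φ (Ψ θstar) = θstar := strict.localInverse_apply_image
  obtain ⟨CΦ, TΦ, hTΦ, hΦlip⟩ := (hΦc.of_le htwo).exists_lipschitzOnWith
  clear_value Φ
  clear hΦdef strict hΨd hΨd0 hecoe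
  clear hker0
  try clear e
  try clear eΨ
  try clear hinj hdim Ψ' hΨ'def
  -- ### Step 3 : `F` vanishes on the implicit zero set near `θstar`.
  set z0 : ↥K := pK θstar with hz0def
  have hΨstar : Ψ θstar = ((0 : ↥S), z0) := by
    rw [hΨdef]; simp only [hFzero, map_zero]; rfl
  set φ : ↥K → EuclideanSpace ℝ (Fin m) := fun z => Φ ((0 : ↥S), z) with hφdef
  have hpairc : Continuous (fun z : ↥K => ((0 : ↥S), z)) := continuous_const.prodMk continuous_id
  have hΦc' : ContDiffAt ℝ 2 Φ ((0 : ↥S), z0) := hΨstar ▸ hΦc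
  have hφc : ContDiffAt ℝ 2 φ z0 :=
    hΦc'.comp z0 (contDiff_const.prodMk contDiff_id).contDiffAt
  have hφz0 : φ z0 = θstar := by
    show Φ ((0 : ↥S), z0) = θstar
    rw [← hΨstar, hΦstar]
  have hFφ : ∀ᶠ z in 𝓝 z0, F (φ z) = 0 := by
    have hpairt : Tendsto (fun z : ↥K => ((0 : ↥S), z)) (𝓝 z0) (𝓝 (Ψ θstar)) := by
      rw [hΨstar]; exact hpairc.tendsto z0
    have t1 : ∀ᶠ z in 𝓝 z0, Ψ (φ z) = ((0 : ↥S), z) := hpairt.eventually hright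
    have t2 : ∀ᶠ z in 𝓝 z0, ContDiffAt ℝ 2 φ z := hφc.eventually (by norm_num)
    have t3 : ∀ᶠ z in 𝓝 z0, (∀ x, Q (J (φ z) x) = 0 → J (φ z) x = 0) := by
      have hφt : Tendsto φ (𝓝 z0) (𝓝 θstar) := by
        rw [← hφz0]; exact hφc.continuousAt
      exact hφt.eventually hker
    obtain ⟨ε, hε, hball⟩ := Metric.eventually_nhds_iff_ball.mp (t1.and (t2.and t3))
    have key : ∀ z ∈ Metric.ball z0 ε,
        HasFDerivAt (fun w => F (φ w)) (0 : ↥K →L[ℝ] EuclideanSpace ℝ (Fin n)) z := by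
      intro z hz
      obtain ⟨hz1, hz2, hz3⟩ := hball z hz
      have hφdiff : DifferentiableAt ℝ φ z := hz2.differentiableAt (by norm_num)
      have hFφd : HasFDerivAt (fun w => F (φ w)) ((J (φ z)).comp (fderiv ℝ φ z)) z :=
        (hFd (φ z)).hasFDerivAt.comp z hφdiff.hasFDerivAt
      have hQd : HasFDerivAt (fun w => Q (F (φ w)))
          (Q.comp ((J (φ z)).comp (fderiv ℝ φ z))) z :=
        Q.hasFDerivAt.comp z hFφd
      have hconst : HasFDerivAt (fun w => Q (F (φ w))) (0 : ↥K →L[ℝ] ↥S) z := by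
        have hev : (fun w => Q (F (φ w))) =ᶠ[𝓝 z] fun _ => (0 : ↥S) := by
          filter_upwards [(Metric.isOpen_ball).mem_nhds hz] with w hw
          exact congrArg Prod.fst ((hball w hw).1)
        exact (hasFDerivAt_const (0 : ↥S) z).congr_of_eventuallyEq hev
      have hQ0 : Q.comp ((J (φ z)).comp (fderiv ℝ φ z)) = 0 := hQd.unique hconst
      have hJ0 : (J (φ z)).comp (fderiv ℝ φ z) = 0 := by
        apply ContinuousLinearMap.ext
        intro h
        have hq : Q (J (φ z) (fderiv ℝ φ z h)) = 0 := by
          have := ContinuousLinearMap.ext_iff.mp hQ0 h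
          simpa using this
        simpa using hz3 _ hq
      rw [hJ0] at hFφd
      exact hFφd
    have hconv : Convex ℝ (Metric.ball z0 ε) := convex_ball z0 ε
    filter_upwards [Metric.ball_mem_nhds z0 hε] with z hz
    have hb := hconv.norm_image_sub_le_of_norm_hasFDerivWithin_le (C := 0)
      (f' := fun _ => (0 : ↥K →L[ℝ] EuclideanSpace ℝ (Fin n)))
      (fun w hw => (key w hw).hasFDerivWithinAt)
      (fun w _ => by exact le_of_eq ContinuousLinearMap.opNorm_zero) (Metric.mem_ball_self hε) hz
    rw [zero_mul] at hb
    have : F (φ z) - F (φ z0) = 0 := norm_le_zero_iff.mp hb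
    have h2 : F (φ z) = F (φ z0) := sub_eq_zero.mp this
    rw [h2, hφz0, hFzero]
  -- ### Step 4 : local Lipschitz bound for `J`, assembly of the estimate.
  obtain ⟨LJ, tJ, htJ, hJlip⟩ := hJc.contDiffAt.exists_lipschitzOnWith
  obtain ⟨εz, hεz, hεzball⟩ := Metric.eventually_nhds_iff_ball.mp hFφ
  obtain ⟨δ2, hδ2, hδ2ball⟩ := Metric.mem_nhds_iff.mp htJ
  have hΦtend : Tendsto Φ (𝓝 (Ψ θstar)) (𝓝 θstar) := by
    have := hΦc.continuousAt
    rwa [ContinuousAt, hΦstar] at this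
  have hΦev : ∀ᶠ p in 𝓝 (Ψ θstar), Φ p ∈ Metric.ball θstar (δ2 / 2) :=
    hΦtend (Metric.ball_mem_nhds _ (by linarith))
  have hTΦev : ∀ᶠ p in 𝓝 (Ψ θstar), p ∈ TΦ := hTΦ
  obtain ⟨εp, hεp, hεpball⟩ := Metric.eventually_nhds_iff_ball.mp (hTΦev.and hΦev)
  have evA : ∀ᶠ θ in 𝓝 θstar, Ψ θ ∈ Metric.ball (Ψ θstar) εp :=
    (hΨc.continuous.tendsto θstar) (Metric.ball_mem_nhds _ hεp)
  have evB : ∀ᶠ θ in 𝓝 θstar, ((0 : ↥S), pK θ) ∈ Metric.ball (Ψ θstar) εp := by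
    have hc : Continuous fun θ : EuclideanSpace ℝ (Fin m) => ((0 : ↥S), pK θ) :=
      continuous_const.prodMk pK.continuous
    have ht : Tendsto (fun θ : EuclideanSpace ℝ (Fin m) => ((0 : ↥S), pK θ))
        (𝓝 θstar) (𝓝 (Ψ θstar)) := by
      rw [hΨstar]; exact hc.tendsto θstar
    exact ht (Metric.ball_mem_nhds _ hεp)
  have evC : ∀ᶠ θ in 𝓝 θstar, pK θ ∈ Metric.ball z0 εz :=
    (pK.continuous.tendsto θstar) (Metric.ball_mem_nhds _ hεz)
  have evD : ∀ᶠ θ in 𝓝 θstar, θ ∈ Metric.ball θstar (δ2 / 2) :=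
    Metric.ball_mem_nhds _ (by linarith)
  have evU : ∀ᶠ θ in 𝓝 θstar, θ ∈ U := hU_open.eventually_mem hθU
  obtain ⟨δ, hδ, hδball⟩ := Metric.eventually_nhds_iff_ball.mp
    (hleft.and (evA.and (evB.and (evC.and (evD.and evU)))))
  refine ⟨Metric.ball θstar δ, (LJ : ℝ) * (CΦ : ℝ) ^ 2 + 1, Metric.isOpen_ball, ?_,
    Metric.mem_ball_self hδ, by positivity, ?_⟩
  · intro θ hθ
    exact (hδball θ hθ).2.2.2.2.2
  · intro θ hθW
    obtain ⟨hL, hA, hB, hC, hD, hU'⟩ := hδball θ hθW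
    set θ0 : EuclideanSpace ℝ (Fin m) := Φ ((0 : ↥S), pK θ) with hθ0def
    have hFθ0 : F θ0 = 0 := hεzball (pK θ) hC
    have hθ0near : θ0 ∈ Metric.ball θstar (δ2 / 2) := (hεpball _ hB).2
    have hθnear : θ ∈ Metric.ball θstar (δ2 / 2) := hD
    -- distance bound `‖θ - θ0‖ ≤ CΦ * ‖F θ‖`
    have hdistb : ‖θ - θ0‖ ≤ (CΦ : ℝ) * ‖F θ‖ := by
      have h1 := hΦlip.dist_le_mul (Ψ θ) (hεpball _ hA).1
        ((0 : ↥S), pK θ) (hεpball _ hB).1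
      rw [hL] at h1
      have h2 : dist (Ψ θ) ((0 : ↥S), pK θ) = ‖Q (F θ)‖ := by
        have he : Ψ θ = (Q (F θ), pK θ) := rfl
        rw [he, Prod.dist_eq]
        show max (dist (Q (F θ)) 0) (dist (pK θ) (pK θ)) = _
        rw [dist_self, dist_zero_right, max_eq_left (norm_nonneg _)]
      have h3 : ‖Q (F θ)‖ ≤ ‖F θ‖ := by
        have := Q.le_opNorm (F θ)
        have hQn : ‖Q‖ ≤ 1 := Submodule.orthogonalProjectionOnto_norm_le _
        nlinarith [norm_nonneg (F θ)]
      rw [dist_eq_norm, h2] at h1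
      calc ‖θ - θ0‖ ≤ (CΦ : ℝ) * ‖Q (F θ)‖ := h1
        _ ≤ (CΦ : ℝ) * ‖F θ‖ := by
            exact mul_le_mul_of_nonneg_left h3 CΦ.2
    -- Taylor bound
    have hseg : segment ℝ θ0 θ ⊆ tJ := by
      intro x hx
      have hsub : segment ℝ θ0 θ ⊆ Metric.ball θstar (δ2 / 2) :=
        (convex_ball _ _).segment_subset hθ0near hθnear
      exact hδ2ball (Metric.ball_subset_ball (by linarith) (hsub hx))
    have hθtJ : θ ∈ tJ := hδ2ball (Metric.ball_subset_ball (by linarith) hθnear)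
    have htaylor : ‖F θ - (J θ) (θ - θ0)‖ ≤ (LJ : ℝ) * ‖θ - θ0‖ ^ 2 := by
      have hGd : ∀ x ∈ segment ℝ θ0 θ,
          HasFDerivWithinAt (fun x => F x - J θ x) ((J x) - (J θ)) (segment ℝ θ0 θ) x :=
        fun x _ => ((hFd x).hasFDerivAt.sub (J θ).hasFDerivAt).hasFDerivWithinAt
      have hbound : ∀ x ∈ segment ℝ θ0 θ, ‖(J x) - (J θ)‖ ≤ (LJ : ℝ) * ‖θ0 - θ‖ := by
        intro x hx
        have hd := hJlip.dist_le_mul x (hseg hx) θ hθtJ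
        rw [dist_eq_norm, dist_eq_norm] at hd
        exact hd.trans (mul_le_mul_of_nonneg_left (aux_segment hx) LJ.2)
      have hb := (convex_segment θ0 θ).norm_image_sub_le_of_norm_hasFDerivWithin_le
        hGd hbound (left_mem_segment ℝ θ0 θ) (right_mem_segment ℝ θ0 θ)
      have heq : (F θ - J θ θ) - (F θ0 - J θ θ0) = F θ - (J θ) (θ - θ0) := by
        rw [hFθ0, map_sub]; abel
      rw [heq] at hb
      calc ‖F θ - (J θ) (θ - θ0)‖ ≤ (LJ : ℝ) * ‖θ0 - θ‖ * ‖θ - θ0‖ := hb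
        _ = (LJ : ℝ) * ‖θ - θ0‖ ^ 2 := by rw [norm_sub_rev θ0 θ]; ring
    -- projection bound and conclusion
    have hw : (J θ) (θ - θ0) ∈ LinearMap.range ((J θ : EuclideanSpace ℝ (Fin m) →ₗ[ℝ] EuclideanSpace ℝ (Fin n))) := ⟨θ - θ0, rfl⟩
    have hproj := aux_proj_bound (LinearMap.range ((J θ : EuclideanSpace ℝ (Fin m) →ₗ[ℝ] EuclideanSpace ℝ (Fin n)))) (F θ) ((J θ) (θ - θ0)) hw
    have hsq : ‖θ - θ0‖ ^ 2 ≤ ((CΦ : ℝ) * ‖F θ‖) ^ 2 := by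
      have h0 : (0:ℝ) ≤ ‖θ - θ0‖ := norm_nonneg _
      nlinarith
    calc ‖(Submodule.orthogonalProjectionOnto (LinearMap.range ((fderiv ℝ F θ : EuclideanSpace ℝ (Fin m) →ₗ[ℝ] EuclideanSpace ℝ (Fin n))))ᗮ (F θ) :
            EuclideanSpace ℝ (Fin n))‖
        ≤ ‖F θ - (J θ) (θ - θ0)‖ := hproj
      _ ≤ (LJ : ℝ) * ‖θ - θ0‖ ^ 2 := htaylor
      _ ≤ (LJ : ℝ) * ((CΦ : ℝ) * ‖F θ‖) ^ 2 := by
          exact mul_le_mul_of_nonneg_left hsq LJ.2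
      _ = (LJ : ℝ) * (CΦ : ℝ) ^ 2 * ‖F θ‖ ^ 2 := by ring
      _ ≤ ((LJ : ℝ) * (CΦ : ℝ) ^ 2 + 1) * ‖F θ‖ ^ 2 := by nlinarith [sq_nonneg ‖F θ‖]
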